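/- For every graph G and threshold function φ with φ(u) ≤ d_G(u) for all u, the minimum size h_φ(G) of a φ-dynamic monopoly satisfies h_φ(G) ≤ ∑_{u ∈ V(G)} φ(u)/(d_G(u)+1). -/

import Mathlib

open scoped Classical

variable {V : Type*} [Fintype V]

/-- A set `S` is closed for `(G, φ)`: every vertex outside `S` has fewer than
`φ u` neighbors inside `S`. -/
def IsClosedSet (G : SimpleGraph V) (φ : V → ℕ) (S : Finset V) : Prop :=
  ∀ u ∉ S, (S.filter (fun w => G.Adj u w)).card < φ u

/-- The closure `H(D)`: the intersection of all closed supersets of `D`. -/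
noncomputable def Hcl (G : SimpleGraph V) (φ : V → ℕ) (D : Finset V) : Finset V :=
  Finset.univ.filter (fun v => ∀ S : Finset V, D ⊆ S → IsClosedSet G φ S → v ∈ S)

namespace Stmt5Aux

variable (G : SimpleGraph V)

/-- neighbors of `u` that come before `u` in the order `σ`. -/
noncomputable def belowF (u : V) (σ : V ≃ Fin (Fintype.card V)) : Finset V :=
  (G.neighborFinset u).filter fun w => σ w < σ u

/-- neighbors of `u` that come after `u` in the order `σ`. -/
noncomputable def aboveF (u : V) (σ : V ≃ Fin (Fintype.card V)) : Finset V :=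
  (G.neighborFinset u).filter fun w => σ u < σ w

/-- the candidate dynamic monopoly associated to an order. -/
noncomputable def Dset (φ : V → ℕ) (σ : V ≃ Fin (Fintype.card V)) : Finset V :=
  Finset.univ.filter fun u => (aboveF G u σ).card < φ u

lemma below_card_add_above_card (u : V) (σ : V ≃ Fin (Fintype.card V)) :
    (belowF G u σ).card + (aboveF G u σ).card = G.degree u := by
  have h : aboveF G u σ = (G.neighborFinset u).filter fun w => ¬ σ w < σ u := by
    apply Finset.filter_congr
    intro w hw
    have hne : σ w ≠ σ u := fun h => (G.ne_of_adj (by simpa using hw)).symm (σ.injective h)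
    constructor
    · exact fun h' => not_lt.2 (le_of_lt h')
    · intro h'
      exact lt_of_le_of_ne (not_lt.1 h') (Ne.symm hne)
  rw [belowF, h, Finset.card_filter_add_card_filter_not]
  exact G.card_neighborFinset_eq_degree u

lemma closed_superset_eq_univ (φ : V → ℕ) (σ : V ≃ Fin (Fintype.card V))
    (S : Finset V) (hD : Dset G φ σ ⊆ S) (hS : IsClosedSet G φ S) : S = Finset.univ := by
  by_contra h
  have hne : (Finset.univ.filter fun v => v ∉ S).Nonempty := by
    rw [Finset.filter_nonempty_iff]
    by_contra hc
    push_neg at hc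
    exact h (Finset.eq_univ_iff_forall.2 fun v => hc v (Finset.mem_univ v))
  obtain ⟨u, hu, hmax⟩ := Finset.exists_max_image _ (fun v => σ v) hne
  rw [Finset.mem_filter] at hu
  have huS : u ∉ S := hu.2
  have huD : u ∉ Dset G φ σ := fun hmem => huS (hD hmem)
  have hge : φ u ≤ (aboveF G u σ).card := by
    by_contra hlt
    exact huD (by simp [Dset, not_lt.1, lt_of_not_ge hlt])
  have hsub : aboveF G u σ ⊆ S.filter fun w => G.Adj u w := by
    intro w hw
    rw [aboveF, Finset.mem_filter] at hw
    have hadj : G.Adj u w := by simpa using hw.1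
    have hwS : w ∈ S := by
      by_contra hwS
      have := hmax w (Finset.mem_filter.2 ⟨Finset.mem_univ w, hwS⟩)
      exact absurd this (not_le.2 hw.2)
    exact Finset.mem_filter.2 ⟨hwS, hadj⟩
  have := hS u huS
  have := Finset.card_le_card hsub
  omega

lemma Hcl_Dset_eq_univ (φ : V → ℕ) (σ : V ≃ Fin (Fintype.card V)) :
    Hcl G φ (Dset G φ σ) = Finset.univ := by
  apply Finset.eq_univ_iff_forall.2
  intro v
  rw [Hcl, Finset.mem_filter]
  refine ⟨Finset.mem_univ v, fun S hD hS => ?_⟩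
  rw [closed_superset_eq_univ G φ σ S hD hS]
  exact Finset.mem_univ v

section Swap

variable (u : V)

lemma below_swap_up (σ : V ≃ Fin (Fintype.card V)) (w : V) (hw : w ∈ G.neighborFinset u)
    (h1 : σ u < σ w) (hmin : ∀ x ∈ G.neighborFinset u, σ u < σ x → σ w ≤ σ x) :
    belowF G u (σ.trans (Equiv.swap (σ u) (σ w))) = insert w (belowF G u σ) := by
  have hu : u ∉ G.neighborFinset u := G.notMem_neighborFinset_self u
  ext x
  simp only [belowF, Finset.mem_filter, Finset.mem_insert, Equiv.trans_apply]
  simp only [Finset.mem_filter, Equiv.swap_apply_left]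
  by_cases hxw : x = w
  · subst hxw
    simp [Equiv.swap_apply_right, h1, hw]
  · have hxu : x ≠ u ∨ x ∉ G.neighborFinset u := by
      by_cases h : x = u
      · subst h; exact Or.inr hu
      · exact Or.inl h
    constructor
    · rintro ⟨hxN, hlt⟩
      have hxu' : x ≠ u := fun h => hu (h ▸ hxN)
      rw [Equiv.swap_apply_of_ne_of_ne (fun h => hxu' (σ.injective h))
        (fun h => hxw (σ.injective h))] at hlt
      refine Or.inr ⟨hxN, ?_⟩
      rcases lt_trichotomy (σ x) (σ u) with h | h | h
      · exact h
      · exact absurd (σ.injective h) hxu'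
      · exact absurd (hmin x hxN h) (not_le.2 hlt)
    · rintro (h | ⟨hxN, hlt⟩)
      · exact absurd h hxw
      · have hxu' : x ≠ u := fun h => hu (h ▸ hxN)
        rw [Equiv.swap_apply_of_ne_of_ne (fun h => hxu' (σ.injective h))
          (fun h => hxw (σ.injective h))]
        exact ⟨hxN, hlt.trans h1⟩

lemma below_swap_down (σ : V ≃ Fin (Fintype.card V)) (w : V) (hw : w ∈ G.neighborFinset u)
    (h1 : σ w < σ u) (hmax : ∀ x ∈ G.neighborFinset u, σ x < σ u → σ x ≤ σ w) :
    belowF G u (σ.trans (Equiv.swap (σ u) (σ w))) = (belowF G u σ).erase w := by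
  have hu : u ∉ G.neighborFinset u := G.notMem_neighborFinset_self u
  ext x
  simp only [belowF, Finset.mem_filter, Finset.mem_erase, Equiv.trans_apply]
  simp only [Finset.mem_filter, Equiv.swap_apply_left]
  by_cases hxw : x = w
  · subst hxw
    simp [Equiv.swap_apply_right, not_lt.2 (le_of_lt h1)]
  · constructor
    · rintro ⟨hxN, hlt⟩
      have hxu : x ≠ u := fun h => hu (h ▸ hxN)
      rw [Equiv.swap_apply_of_ne_of_ne (fun h => hxu (σ.injective h))
        (fun h => hxw (σ.injective h))] at hlt
      exact ⟨hxw, hxN, hlt.trans h1⟩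
    · rintro ⟨_, hxN, hlt⟩
      have hxu : x ≠ u := fun h => hu (h ▸ hxN)
      rw [Equiv.swap_apply_of_ne_of_ne (fun h => hxu (σ.injective h))
        (fun h => hxw (σ.injective h))]
      refine ⟨hxN, ?_⟩
      rcases lt_trichotomy (σ x) (σ w) with h | h | h
      · exact h
      · exact absurd (σ.injective h) hxw
      · exact absurd (hmax x hxN hlt) (not_le.2 h)

lemma above_swap_down (σ : V ≃ Fin (Fintype.card V)) (w : V) (hw : w ∈ G.neighborFinset u)
    (h1 : σ w < σ u) (hmax : ∀ x ∈ G.neighborFinset u, σ x < σ u → σ x ≤ σ w) :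
    aboveF G u (σ.trans (Equiv.swap (σ u) (σ w))) = insert w (aboveF G u σ) := by
  have hu : u ∉ G.neighborFinset u := G.notMem_neighborFinset_self u
  ext x
  simp only [aboveF, Finset.mem_filter, Finset.mem_insert, Equiv.trans_apply]
  simp only [Finset.mem_filter, Equiv.swap_apply_left]
  by_cases hxw : x = w
  · subst hxw
    simp [Equiv.swap_apply_right, h1, hw]
  · constructor
    · rintro ⟨hxN, hlt⟩
      have hxu : x ≠ u := fun h => hu (h ▸ hxN)
      rw [Equiv.swap_apply_of_ne_of_ne (fun h => hxu (σ.injective h))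
        (fun h => hxw (σ.injective h))] at hlt
      refine Or.inr ⟨hxN, ?_⟩
      rcases lt_trichotomy (σ u) (σ x) with h | h | h
      · exact h
      · exact absurd (σ.injective h) (Ne.symm hxu)
      · exact absurd (hmax x hxN h) (not_le.2 hlt)
    · rintro (h | ⟨hxN, hlt⟩)
      · exact absurd h hxw
      · have hxu : x ≠ u := fun h => hu (h ▸ hxN)
        rw [Equiv.swap_apply_of_ne_of_ne (fun h => hxu (σ.injective h))
          (fun h => hxw (σ.injective h))]
        exact ⟨hxN, h1.trans hlt⟩

end Swap

section Fibers

variable (u : V)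

/-- move `u` just past its next-later neighbor. -/
noncomputable def upO (σ : V ≃ Fin (Fintype.card V)) : V ≃ Fin (Fintype.card V) :=
  if h : (aboveF G u σ).Nonempty then
    σ.trans (Equiv.swap (σ u) (((aboveF G u σ).image σ).min' (h.image σ))) else σ

/-- move `u` just before its previous neighbor. -/
noncomputable def downO (σ : V ≃ Fin (Fintype.card V)) : V ≃ Fin (Fintype.card V) :=
  if h : (belowF G u σ).Nonempty then
    σ.trans (Equiv.swap (σ u) (((belowF G u σ).image σ).max' (h.image σ))) else σ

lemma upO_spec (σ : V ≃ Fin (Fintype.card V)) (h : (aboveF G u σ).Nonempty) :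
    ∃ w ∈ aboveF G u σ,
      upO G u σ = σ.trans (Equiv.swap (σ u) (σ w)) ∧
      belowF G u (upO G u σ) = insert w (belowF G u σ) ∧
      w ∉ belowF G u σ := by
  obtain ⟨w, hwmem, hw⟩ := Finset.mem_image.1 (((aboveF G u σ).image σ).min'_mem (h.image σ))
  have hwmem' := hwmem
  rw [aboveF, Finset.mem_filter] at hwmem'
  have hmin : ∀ x ∈ G.neighborFinset u, σ u < σ x → σ w ≤ σ x := by
    intro x hx hx'
    rw [hw]
    exact Finset.min'_le _ _ (Finset.mem_image_of_mem σ (Finset.mem_filter.2 ⟨hx, hx'⟩))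
  have heq : upO G u σ = σ.trans (Equiv.swap (σ u) (σ w)) := by
    rw [upO, dif_pos h, hw]
  refine ⟨w, hwmem, heq, ?_, ?_⟩
  · rw [heq]
    exact below_swap_up G u σ w hwmem'.1 hwmem'.2 hmin
  · rw [belowF, Finset.mem_filter]
    push_neg
    intro _
    exact le_of_lt hwmem'.2

lemma downO_spec (σ : V ≃ Fin (Fintype.card V)) (h : (belowF G u σ).Nonempty) :
    ∃ w ∈ belowF G u σ,
      downO G u σ = σ.trans (Equiv.swap (σ u) (σ w)) ∧
      belowF G u (downO G u σ) = (belowF G u σ).erase w ∧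
      aboveF G u (downO G u σ) = insert w (aboveF G u σ) ∧
      w ∉ aboveF G u σ := by
  obtain ⟨w, hwmem, hw⟩ := Finset.mem_image.1 (((belowF G u σ).image σ).max'_mem (h.image σ))
  have hwmem' := hwmem
  rw [belowF, Finset.mem_filter] at hwmem'
  have hmax : ∀ x ∈ G.neighborFinset u, σ x < σ u → σ x ≤ σ w := by
    intro x hx hx'
    rw [hw]
    exact Finset.le_max' _ _ (Finset.mem_image_of_mem σ (Finset.mem_filter.2 ⟨hx, hx'⟩))
  have heq : downO G u σ = σ.trans (Equiv.swap (σ u) (σ w)) := by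
    rw [downO, dif_pos h, hw]
  refine ⟨w, hwmem, heq, ?_, ?_, ?_⟩
  · rw [heq]
    exact below_swap_down G u σ w hwmem'.1 hwmem'.2 hmax
  · rw [heq]
    exact above_swap_down G u σ w hwmem'.1 hwmem'.2 hmax
  · rw [aboveF, Finset.mem_filter]
    push_neg
    intro _
    exact le_of_lt hwmem'.2

lemma downO_upO (σ : V ≃ Fin (Fintype.card V)) (h : (aboveF G u σ).Nonempty) :
    downO G u (upO G u σ) = σ := by
  have hu : u ∉ G.neighborFinset u := G.notMem_neighborFinset_self u
  obtain ⟨w, hwmem, heq, hbel, hwnb⟩ := upO_spec G u σ h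
  rw [aboveF, Finset.mem_filter] at hwmem
  set σ' := upO G u σ with hσ'
  have hσ'u : σ' u = σ w := by
    rw [heq]; simp [Equiv.trans_apply, Equiv.swap_apply_left]
  have hσ'w : σ' w = σ u := by
    rw [heq]; simp [Equiv.trans_apply, Equiv.swap_apply_right]
  have hσ'x : ∀ x ∈ belowF G u σ, σ' x = σ x := by
    intro x hx
    rw [belowF, Finset.mem_filter] at hx
    have hxu : x ≠ u := fun hh => hu (hh ▸ hx.1)
    have hxw : x ≠ w := fun hh => by
      subst hh
      exact absurd hwmem.2 (not_lt.2 (le_of_lt hx.2))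
    rw [heq]
    simp only [Equiv.trans_apply]
    exact Equiv.swap_apply_of_ne_of_ne (fun hh => hxu (σ.injective hh))
      (fun hh => hxw (σ.injective hh))
  have hne : (belowF G u σ').Nonempty := ⟨w, hbel ▸ Finset.mem_insert_self w _⟩
  have hmax_eq : ((belowF G u σ').image σ').max' (hne.image σ') = σ u := by
    apply le_antisymm
    · apply Finset.max'_le
      intro y hy
      obtain ⟨x, hx, hxy⟩ := Finset.mem_image.1 hy
      rw [hbel, Finset.mem_insert] at hx
      rcases hx with hh | hh
      · subst hh; rw [← hxy, hσ'w]
      · rw [← hxy, hσ'x x hh]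
        exact le_of_lt (Finset.mem_filter.1 hh).2
    · apply Finset.le_max'
      rw [← hσ'w]
      apply Finset.mem_image_of_mem
      rw [hbel]
      exact Finset.mem_insert_self w _
  rw [downO, dif_pos hne]
  have hswap : ((belowF G u σ').image σ').max' (hne.image σ') = σ u := hmax_eq
  rw [hswap, hσ'u]
  apply Equiv.ext
  intro x
  simp only [Equiv.trans_apply, heq]
  rw [Equiv.swap_comm (σ w) (σ u)]
  exact Equiv.swap_apply_self _ _ _

lemma upO_downO (σ : V ≃ Fin (Fintype.card V)) (h : (belowF G u σ).Nonempty) :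
    upO G u (downO G u σ) = σ := by
  have hu : u ∉ G.neighborFinset u := G.notMem_neighborFinset_self u
  obtain ⟨w, hwmem, heq, _, habv, hwna⟩ := downO_spec G u σ h
  rw [belowF, Finset.mem_filter] at hwmem
  set σ' := downO G u σ with hσ'
  have hσ'u : σ' u = σ w := by
    rw [heq]; simp [Equiv.trans_apply, Equiv.swap_apply_left]
  have hσ'w : σ' w = σ u := by
    rw [heq]; simp [Equiv.trans_apply, Equiv.swap_apply_right]
  have hσ'x : ∀ x ∈ aboveF G u σ, σ' x = σ x := by
    intro x hx
    rw [aboveF, Finset.mem_filter] at hx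
    have hxu : x ≠ u := fun hh => hu (hh ▸ hx.1)
    have hxw : x ≠ w := fun hh => by
      subst hh
      exact absurd hwmem.2 (not_lt.2 (le_of_lt hx.2))
    rw [heq]
    simp only [Equiv.trans_apply]
    exact Equiv.swap_apply_of_ne_of_ne (fun hh => hxu (σ.injective hh))
      (fun hh => hxw (σ.injective hh))
  have hne : (aboveF G u σ').Nonempty := ⟨w, habv ▸ Finset.mem_insert_self w _⟩
  have hmin_eq : ((aboveF G u σ').image σ').min' (hne.image σ') = σ u := by
    apply le_antisymm
    · apply Finset.min'_le
      rw [← hσ'w]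
      apply Finset.mem_image_of_mem
      rw [habv]
      exact Finset.mem_insert_self w _
    · apply Finset.le_min'
      intro y hy
      obtain ⟨x, hx, hxy⟩ := Finset.mem_image.1 hy
      rw [habv, Finset.mem_insert] at hx
      rcases hx with hh | hh
      · subst hh; rw [← hxy, hσ'w]
      · rw [← hxy, hσ'x x hh]
        exact le_of_lt (Finset.mem_filter.1 hh).2
  rw [upO, dif_pos hne, hmin_eq, hσ'u]
  apply Equiv.ext
  intro x
  simp only [Equiv.trans_apply, heq]
  rw [Equiv.swap_comm (σ w) (σ u)]
  exact Equiv.swap_apply_self _ _ _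

/-- the set of orders in which exactly `k` neighbors of `u` come before `u`. -/
noncomputable def Fiber (k : ℕ) : Finset (V ≃ Fin (Fintype.card V)) :=
  Finset.univ.filter fun σ => (belowF G u σ).card = k

lemma fiber_card_succ (k : ℕ) (hk : k + 1 ≤ G.degree u) :
    (Fiber G u k).card = (Fiber G u (k + 1)).card := by
  have habove : ∀ σ ∈ Fiber G u k, (aboveF G u σ).Nonempty := by
    intro σ hσ
    rw [Fiber, Finset.mem_filter] at hσ
    have := below_card_add_above_card G u σ
    rw [← Finset.card_pos]
    omega
  have hbelow : ∀ τ ∈ Fiber G u (k + 1), (belowF G u τ).Nonempty := by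
    intro τ hτ
    rw [Fiber, Finset.mem_filter] at hτ
    rw [← Finset.card_pos]
    omega
  apply Finset.card_bij' (i := fun σ _ => upO G u σ) (j := fun τ _ => downO G u τ)
  · intro σ hσ
    obtain ⟨w, hwmem, _, hbel, hwnb⟩ := upO_spec G u σ (habove σ hσ)
    rw [Fiber, Finset.mem_filter] at hσ ⊢
    refine ⟨Finset.mem_univ _, ?_⟩
    rw [hbel, Finset.card_insert_of_notMem hwnb, hσ.2]
  · intro τ hτ
    obtain ⟨w, hwmem, _, hbel, _, _⟩ := downO_spec G u τ (hbelow τ hτ)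
    rw [Fiber, Finset.mem_filter] at hτ ⊢
    refine ⟨Finset.mem_univ _, ?_⟩
    rw [hbel, Finset.card_erase_of_mem hwmem, hτ.2]
    omega
  · intro σ hσ
    exact downO_upO G u σ (habove σ hσ)
  · intro τ hτ
    exact upO_downO G u τ (hbelow τ hτ)

lemma fiber_card_eq (k : ℕ) (hk : k ≤ G.degree u) :
    (Fiber G u k).card = (Fiber G u 0).card := by
  induction k with
  | zero => rfl
  | succ m ih =>
    rw [← fiber_card_succ G u m hk]
    exact ih (Nat.le_of_succ_le hk)

lemma total_card_eq :
    Fintype.card (V ≃ Fin (Fintype.card V)) = (G.degree u + 1) * (Fiber G u 0).card := by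
  have h : (Finset.univ : Finset (V ≃ Fin (Fintype.card V))).card =
      ∑ k ∈ Finset.range (G.degree u + 1), (Fiber G u k).card := by
    apply Finset.card_eq_sum_card_fiberwise
    intro σ _
    simp only [Finset.coe_range, Set.mem_Iio]
    have h1 := below_card_add_above_card G u σ
    omega
  calc Fintype.card (V ≃ Fin (Fintype.card V))
      = (Finset.univ : Finset (V ≃ Fin (Fintype.card V))).card := (Finset.card_univ).symm
    _ = ∑ k ∈ Finset.range (G.degree u + 1), (Fiber G u k).card := h
    _ = ∑ _k ∈ Finset.range (G.degree u + 1), (Fiber G u 0).card :=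
        Finset.sum_congr rfl (fun k hk => fiber_card_eq G u k (by
          rw [Finset.mem_range] at hk; omega))
    _ = (G.degree u + 1) * (Fiber G u 0).card := by
        rw [Finset.sum_const, Finset.card_range, smul_eq_mul]

/-- orders in which `u` belongs to the associated monopoly. -/
noncomputable def CondSet (φ : V → ℕ) : Finset (V ≃ Fin (Fintype.card V)) :=
  Finset.univ.filter fun σ => (aboveF G u σ).card < φ u

lemma condSet_card (φ : V → ℕ) (hφu : φ u ≤ G.degree u) :
    (CondSet G u φ).card = φ u * (Fiber G u 0).card := by
  set d := G.degree u with hd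
  have hK : ∀ σ : V ≃ Fin (Fintype.card V), σ ∈ CondSet G u φ →
      (belowF G u σ).card ∈ (Finset.range (d + 1)).filter fun k => d - k < φ u := by
    intro σ hσ
    rw [CondSet, Finset.mem_filter] at hσ
    have h1 := below_card_add_above_card G u σ
    rw [Finset.mem_filter, Finset.mem_range]
    omega
  have h : (CondSet G u φ).card =
      ∑ k ∈ (Finset.range (d + 1)).filter (fun k => d - k < φ u),
        ((CondSet G u φ).filter fun σ => (belowF G u σ).card = k).card :=
    Finset.card_eq_sum_card_fiberwise hK
  have hfib : ∀ k ∈ (Finset.range (d + 1)).filter (fun k => d - k < φ u),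
      ((CondSet G u φ).filter fun σ => (belowF G u σ).card = k) = Fiber G u k := by
    intro k hk
    rw [Finset.mem_filter, Finset.mem_range] at hk
    ext σ
    rw [Fiber, CondSet, Finset.filter_filter, Finset.mem_filter, Finset.mem_filter]
    constructor
    · rintro ⟨h1, _, h3⟩; exact ⟨h1, h3⟩
    · rintro ⟨h1, h2⟩
      have h3 := below_card_add_above_card G u σ
      exact ⟨h1, by omega, h2⟩
  have hfib' : ∀ k ∈ (Finset.range (d + 1)).filter (fun k => d - k < φ u),
      ((CondSet G u φ).filter fun σ => (belowF G u σ).card = k).card = (Fiber G u 0).card := by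
    intro k hk
    rw [hfib k hk]
    rw [Finset.mem_filter, Finset.mem_range] at hk
    exact fiber_card_eq G u k (by omega)
  have hKcard : ((Finset.range (d + 1)).filter fun k => d - k < φ u).card = φ u := by
    have heq : (Finset.range (d + 1)).filter (fun k => d - k < φ u) = Finset.Ioc (d - φ u) d := by
      ext k
      rw [Finset.mem_filter, Finset.mem_range, Finset.mem_Ioc]
      omega
    rw [heq, Nat.card_Ioc]
    omega
  calc (CondSet G u φ).card
      = ∑ k ∈ (Finset.range (d + 1)).filter (fun k => d - k < φ u),
          ((CondSet G u φ).filter fun σ => (belowF G u σ).card = k).card := h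
    _ = ∑ _k ∈ (Finset.range (d + 1)).filter (fun k => d - k < φ u), (Fiber G u 0).card :=
        Finset.sum_congr rfl hfib'
    _ = φ u * (Fiber G u 0).card := by
        rw [Finset.sum_const, smul_eq_mul, hKcard]

lemma key_count (φ : V → ℕ) (hφu : φ u ≤ G.degree u) :
    (G.degree u + 1) * (CondSet G u φ).card =
      φ u * Fintype.card (V ≃ Fin (Fintype.card V)) := by
  rw [condSet_card G u φ hφu, total_card_eq G u]
  ring

end Fibers

end Stmt5Aux

theorem stmt5 (G : SimpleGraph V) (φ : V → ℕ) (hφ : ∀ u, φ u ≤ G.degree u) :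
    ∃ D : Finset V, Hcl G φ D = Finset.univ ∧
      (D.card : ℝ) ≤ ∑ u : V, (φ u : ℝ) / ((G.degree u : ℝ) + 1) := by
  classical
  set n := Fintype.card V
  set Nt := Fintype.card (V ≃ Fin n) with hNt
  have hNtpos : 0 < Nt := Fintype.card_pos_iff.2 ⟨Fintype.equivFin V⟩
  -- sum over all orders
  have hsum : ∑ σ : V ≃ Fin n, ((Stmt5Aux.Dset G φ σ).card : ℝ) =
      ∑ u : V, ((Stmt5Aux.CondSet G u φ).card : ℝ) := by
    have : ∀ σ : V ≃ Fin n, ((Stmt5Aux.Dset G φ σ).card : ℝ) =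
        ∑ u : V, if (Stmt5Aux.aboveF G u σ).card < φ u then (1 : ℝ) else 0 := by
      intro σ
      rw [Stmt5Aux.Dset, Finset.card_filter]
      push_cast
      rfl
    rw [Finset.sum_congr rfl fun σ _ => this σ, Finset.sum_comm]
    apply Finset.sum_congr rfl
    intro u _
    rw [Stmt5Aux.CondSet, Finset.card_filter]
    push_cast
    rfl
  have hcond : ∀ u : V, ((Stmt5Aux.CondSet G u φ).card : ℝ) =
      (φ u : ℝ) * Nt / ((G.degree u : ℝ) + 1) := by
    intro u
    have h := Stmt5Aux.key_count G u φ (hφ u)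
    have hpos : ((G.degree u : ℝ) + 1) ≠ 0 := by positivity
    field_simp
    have := congrArg (fun m : ℕ => (m : ℝ)) h
    push_cast at this
    linarith [this]
  have havg : ∑ σ : V ≃ Fin n, ((Stmt5Aux.Dset G φ σ).card : ℝ) =
      Nt * ∑ u : V, (φ u : ℝ) / ((G.degree u : ℝ) + 1) := by
    rw [hsum, Finset.mul_sum]
    apply Finset.sum_congr rfl
    intro u _
    rw [hcond u]
    ring
  -- extract a good order
  haveI : Nonempty (V ≃ Fin n) := ⟨Fintype.equivFin V⟩
  have hex : ∃ σ : V ≃ Fin n, ((Stmt5Aux.Dset G φ σ).card : ℝ) ≤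
      ∑ u : V, (φ u : ℝ) / ((G.degree u : ℝ) + 1) := by
    by_contra hc
    push_neg at hc
    have : Nt * ∑ u : V, (φ u : ℝ) / ((G.degree u : ℝ) + 1) <
        ∑ σ : V ≃ Fin n, ((Stmt5Aux.Dset G φ σ).card : ℝ) := by
      calc Nt * ∑ u : V, (φ u : ℝ) / ((G.degree u : ℝ) + 1)
          = ∑ _σ : V ≃ Fin n, ∑ u : V, (φ u : ℝ) / ((G.degree u : ℝ) + 1) := by
            rw [Finset.sum_const, Finset.card_univ, nsmul_eq_mul]
        _ < ∑ σ : V ≃ Fin n, ((Stmt5Aux.Dset G φ σ).card : ℝ) := by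
            apply Finset.sum_lt_sum_of_nonempty
            · exact Finset.univ_nonempty
            · intro σ _
              exact hc σ
    rw [havg] at this
    exact lt_irrefl _ this
  obtain ⟨σ, hσ⟩ := hex
  exact ⟨Stmt5Aux.Dset G φ σ, Stmt5Aux.Hcl_Dset_eq_univ G φ σ, hσ⟩
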